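/- Let D ∈ ℝ^{n×n} be symmetric and invertible with spectral decomposition D = VΛVᵀ (V orthogonal, Λ diagonal with nonzero entries), let |D| := V|Λ|Vᵀ, and let |D| = L·Lᵀ with L invertible. Then the matrix M_r := L⁻¹·D·L⁻ᵀ − I is symmetric, satisfies M_r² = −2·M_r (so every eigenvalue of M_r is 0 or −2), and the rank of M_r equals the number of negative eigenvalues of D (counted with multiplicity). -/

import Mathlib

open Matrix

theorem stmt_6 {n : ℕ} (D V L : Matrix (Fin n) (Fin n) ℝ) (d : Fin n → ℝ)
    (hDsym : Dᵀ = D) (hDinv : IsUnit D.det)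
    (hV : Vᵀ * V = 1) (hspec : D = V * Matrix.diagonal d * Vᵀ)
    (hd : ∀ i, d i ≠ 0)
    (hL : IsUnit L.det)
    (hChol : V * Matrix.diagonal (fun i => |d i|) * Vᵀ = L * Lᵀ)
    (Mr : Matrix (Fin n) (Fin n) ℝ) (hMr : Mr = L⁻¹ * D * (Lᵀ)⁻¹ - 1) :
    Mrᵀ = Mr ∧
      Mr ^ 2 = (-2 : ℝ) • Mr ∧
      (∀ μ ∈ spectrum ℝ Mr, μ = 0 ∨ μ = -2) ∧
      Mr.rank = Fintype.card {i : Fin n // d i < 0} := by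
  have hVV' : V * Vᵀ = 1 := mul_eq_one_comm.mp hV
  have hLT : IsUnit Lᵀ.det := by rwa [Matrix.det_transpose]
  have hLinv : L⁻¹ * L = 1 := Matrix.nonsing_inv_mul L hL
  have hLinv' : L * L⁻¹ = 1 := Matrix.mul_nonsing_inv L hL
  have hLTinv : (Lᵀ)⁻¹ * Lᵀ = 1 := Matrix.nonsing_inv_mul Lᵀ hLT
  have hLTinv' : Lᵀ * (Lᵀ)⁻¹ = 1 := Matrix.mul_nonsing_inv Lᵀ hLT
  have habsne : ∀ i, |d i| ≠ 0 := fun i => abs_ne_zero.mpr (hd i)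
  -- inverse of L * Lᵀ
  have hinv : (L * Lᵀ)⁻¹ = V * Matrix.diagonal (fun i => (|d i|)⁻¹) * Vᵀ := by
    refine Matrix.inv_eq_right_inv ?_
    rw [← hChol]
    calc V * Matrix.diagonal (fun i => |d i|) * Vᵀ *
          (V * Matrix.diagonal (fun i => (|d i|)⁻¹) * Vᵀ)
        = V * Matrix.diagonal (fun i => |d i|) * (Vᵀ * V) *
            Matrix.diagonal (fun i => (|d i|)⁻¹) * Vᵀ := by
          noncomm_ring
      _ = V * (Matrix.diagonal (fun i => |d i|) *
            Matrix.diagonal (fun i => (|d i|)⁻¹)) * Vᵀ := by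
          rw [hV, Matrix.mul_one]; noncomm_ring
      _ = 1 := by
          rw [Matrix.diagonal_mul_diagonal]
          have : (fun i => |d i| * (|d i|)⁻¹) = fun _ : Fin n => (1 : ℝ) := by
            funext i; exact mul_inv_cancel₀ (habsne i)
          rw [this, Matrix.diagonal_one, Matrix.mul_one, hVV']
  -- key : D * (L*Lᵀ)⁻¹ * D = L * Lᵀ
  have hkey : D * (L * Lᵀ)⁻¹ * D = L * Lᵀ := by
    rw [hinv, hspec, ← hChol]
    calc V * Matrix.diagonal d * Vᵀ * (V * Matrix.diagonal (fun i => (|d i|)⁻¹) * Vᵀ) *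
          (V * Matrix.diagonal d * Vᵀ)
        = V * (Matrix.diagonal d * (Vᵀ * V) * Matrix.diagonal (fun i => (|d i|)⁻¹) *
            (Vᵀ * V) * Matrix.diagonal d) * Vᵀ := by noncomm_ring
      _ = V * (Matrix.diagonal d * Matrix.diagonal (fun i => (|d i|)⁻¹) *
            Matrix.diagonal d) * Vᵀ := by rw [hV]; noncomm_ring
      _ = V * Matrix.diagonal (fun i => |d i|) * Vᵀ := by
          rw [Matrix.diagonal_mul_diagonal, Matrix.diagonal_mul_diagonal]
          have hfun : (fun i => d i * (|d i|)⁻¹ * d i) = fun i => |d i| := by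
            funext i
            calc d i * (|d i|)⁻¹ * d i = d i * d i * (|d i|)⁻¹ := by ring
              _ = |d i| * |d i| * (|d i|)⁻¹ := by rw [abs_mul_abs_self]
              _ = |d i| := by rw [mul_assoc, mul_inv_cancel₀ (habsne i), mul_one]
          rw [hfun]
  -- A := L⁻¹ * D * (Lᵀ)⁻¹ squares to 1
  have hA2 : (L⁻¹ * D * (Lᵀ)⁻¹) * (L⁻¹ * D * (Lᵀ)⁻¹) = 1 := by
    have h1 : (Lᵀ)⁻¹ * L⁻¹ = (L * Lᵀ)⁻¹ := (Matrix.mul_inv_rev L Lᵀ).symm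
    calc (L⁻¹ * D * (Lᵀ)⁻¹) * (L⁻¹ * D * (Lᵀ)⁻¹)
        = L⁻¹ * (D * ((Lᵀ)⁻¹ * L⁻¹) * D) * (Lᵀ)⁻¹ := by noncomm_ring
      _ = L⁻¹ * (L * Lᵀ) * (Lᵀ)⁻¹ := by rw [h1, hkey]
      _ = 1 := by
          rw [← Matrix.mul_assoc L⁻¹ L Lᵀ, hLinv, Matrix.one_mul, hLTinv']
  -- symmetry
  have hsym : Mrᵀ = Mr := by
    rw [hMr]
    rw [Matrix.transpose_sub, Matrix.transpose_one, Matrix.transpose_mul,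
      Matrix.transpose_mul, Matrix.transpose_nonsing_inv, Matrix.transpose_nonsing_inv,
      hDsym, Matrix.transpose_transpose, Matrix.mul_assoc]
  -- M² = -2 M
  have hsq : Mr ^ 2 = (-2 : ℝ) • Mr := by
    rw [hMr]
    set A := L⁻¹ * D * (Lᵀ)⁻¹ with hA
    have expand : (A - 1) ^ 2 = A * A - A - A + 1 := by noncomm_ring
    have h2 : ((-2 : ℝ) • (A - 1) : Matrix (Fin n) (Fin n) ℝ) = 1 - A - A + 1 := by
      rw [show ((-2 : ℝ)) = -(2 : ℝ) from by norm_num, neg_smul, two_smul]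
      abel
    rw [expand, hA2, h2]
  refine ⟨hsym, hsq, ?_, ?_⟩
  · -- spectrum
    intro μ hμ
    by_contra h
    push_neg at h
    obtain ⟨h0, h2⟩ := h
    have hne : μ * (-2 - μ) ≠ 0 := by
      apply mul_ne_zero h0
      intro hc
      apply h2
      linarith [sub_eq_zero.mp hc]
    have hmem := hμ
    rw [spectrum.mem_iff] at hmem
    apply hmem
    have hprod : (algebraMap ℝ (Matrix (Fin n) (Fin n) ℝ) μ - Mr) *
        ((μ * (-2 - μ))⁻¹ • (algebraMap ℝ (Matrix (Fin n) (Fin n) ℝ) (-2 - μ) - Mr)) = 1 := by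
      have halg : ∀ c : ℝ, algebraMap ℝ (Matrix (Fin n) (Fin n) ℝ) c = c • (1 : Matrix (Fin n) (Fin n) ℝ) := by
        intro c
        rw [Algebra.algebraMap_eq_smul_one]
      rw [halg, halg]
      have expand : (μ • (1 : Matrix (Fin n) (Fin n) ℝ) - Mr) * ((-2 - μ) • 1 - Mr)
          = (μ * (-2 - μ)) • 1 + (Mr ^ 2 - (-2 : ℝ) • Mr) := by
        have : (μ • (1 : Matrix (Fin n) (Fin n) ℝ) - Mr) * ((-2 - μ) • 1 - Mr)
            = (μ * (-2 - μ)) • (1 : Matrix (Fin n) (Fin n) ℝ)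
              - μ • Mr - (-2 - μ) • Mr + Mr * Mr := by
          rw [sub_mul, mul_sub, mul_sub, smul_mul_smul_comm, Matrix.one_mul,
            Matrix.smul_mul, Matrix.one_mul, Matrix.mul_smul, Matrix.mul_one]
          abel
        rw [this, sq]
        have : μ • Mr + (-2 - μ) • Mr = (-2 : ℝ) • Mr := by
          rw [← add_smul]; congr 1; ring
        rw [← this]
        abel
      rw [mul_smul_comm, expand, hsq, sub_self, add_zero, smul_smul,
        inv_mul_cancel₀ hne, one_smul]
    exact (Matrix.isUnit_iff_isUnit_det _).mpr (Matrix.isUnit_det_of_right_inverse hprod)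
  · -- rank
    have hMr' : Mr = L⁻¹ * (V * Matrix.diagonal (fun i => d i - |d i|) * Vᵀ) * (Lᵀ)⁻¹ := by
      rw [hMr]
      have hdiff : V * Matrix.diagonal (fun i => d i - |d i|) * Vᵀ = D - L * Lᵀ := by
        rw [hspec, ← hChol]
        have : Matrix.diagonal (fun i => d i - |d i|)
            = Matrix.diagonal d - Matrix.diagonal (fun i => |d i|) := by
          rw [Matrix.diagonal_sub]
        rw [this]; noncomm_ring
      rw [hdiff]
      rw [Matrix.mul_sub, Matrix.sub_mul]
      congr 1
      rw [← Matrix.mul_assoc L⁻¹ L Lᵀ, hLinv, Matrix.one_mul, hLTinv']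
    rw [hMr']
    have hVdet : IsUnit V.det := by
      have : V.det * V.det = 1 := by
        have := congrArg Matrix.det hV
        rwa [Matrix.det_mul, Matrix.det_transpose, Matrix.det_one] at this
      exact IsUnit.of_mul_eq_one _ this
    have hVTdet : IsUnit Vᵀ.det := by rwa [Matrix.det_transpose]
    have hLinvdet : IsUnit (L⁻¹).det := by
      rw [Matrix.det_nonsing_inv]
      exact hL.ringInverse
    have hLTinvdet : IsUnit ((Lᵀ)⁻¹).det := by
      rw [Matrix.det_nonsing_inv]
      exact hLT.ringInverse
    rw [Matrix.rank_mul_eq_left_of_isUnit_det _ _ hLTinvdet,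
      Matrix.rank_mul_eq_right_of_isUnit_det _ _ hLinvdet,
      Matrix.rank_mul_eq_left_of_isUnit_det _ _ hVTdet,
      Matrix.rank_mul_eq_right_of_isUnit_det _ _ hVdet,
      Matrix.rank_diagonal]
    apply Fintype.card_congr
    apply Equiv.subtypeEquivRight
    intro i
    constructor
    · intro h
      by_contra hpos
      push_neg at hpos
      rw [abs_of_nonneg hpos] at h
      simp at h
    · intro h
      rw [abs_of_neg h]
      intro hc
      have : d i = 0 := by linarith [sub_eq_zero.mp hc]
      exact hd i this
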